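/- Every ℝ-linear endomorphism M of ℍ (viewed as a 4-dimensional real vector space) can be written in the form M(q) = p₀·q + p₁·q·i + p₂·q·j + p₃·q·k for some quaternions p₀, p₁, p₂, p₃, and this representation is unique. -/

import Mathlib

open Quaternion

/-- The quaternion units `i`, `j`, `k`. -/
def qi : ℍ[ℝ] := ⟨0, 1, 0, 0⟩
def qj : ℍ[ℝ] := ⟨0, 0, 1, 0⟩
def qk : ℍ[ℝ] := ⟨0, 0, 0, 1⟩

@[simp] lemma qi_re : qi.re = 0 := rfl
@[simp] lemma qi_imI : qi.imI = 1 := rfl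
@[simp] lemma qi_imJ : qi.imJ = 0 := rfl
@[simp] lemma qi_imK : qi.imK = 0 := rfl
@[simp] lemma qj_re : qj.re = 0 := rfl
@[simp] lemma qj_imI : qj.imI = 0 := rfl
@[simp] lemma qj_imJ : qj.imJ = 1 := rfl
@[simp] lemma qj_imK : qj.imK = 0 := rfl
@[simp] lemma qk_re : qk.re = 0 := rfl
@[simp] lemma qk_imI : qk.imI = 0 := rfl
@[simp] lemma qk_imJ : qk.imJ = 0 := rfl
@[simp] lemma qk_imK : qk.imK = 1 := rfl

/-- Candidate coefficients, written in terms of the values `a = M 1`, `b = M i`,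
`c = M j`, `d = M k`. -/
noncomputable def P0 (a b c d : ℍ[ℝ]) : ℍ[ℝ] := (4:ℝ)⁻¹ • (a - b*qi - c*qj - d*qk)
noncomputable def P1 (a b c d : ℍ[ℝ]) : ℍ[ℝ] := (4:ℝ)⁻¹ • (c*qk - d*qj - a*qi - b)
noncomputable def P2 (a b c d : ℍ[ℝ]) : ℍ[ℝ] := (4:ℝ)⁻¹ • (d*qi - b*qk - a*qj - c)
noncomputable def P3 (a b c d : ℍ[ℝ]) : ℍ[ℝ] := (4:ℝ)⁻¹ • (b*qj - c*qi - a*qk - d)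

lemma quat_decomp (q : ℍ[ℝ]) :
    q = q.re • (1:ℍ[ℝ]) + q.imI • qi + q.imJ • qj + q.imK • qk := by
  ext <;> simp

lemma base1 (a b c d : ℍ[ℝ]) :
    a = P0 a b c d * 1 + P1 a b c d * 1 * qi + P2 a b c d * 1 * qj + P3 a b c d * 1 * qk := by
  ext <;> simp [P0, P1, P2, P3] <;> ring

lemma basei (a b c d : ℍ[ℝ]) :
    b = P0 a b c d * qi + P1 a b c d * qi * qi + P2 a b c d * qi * qj + P3 a b c d * qi * qk := by
  ext <;> simp [P0, P1, P2, P3] <;> ring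

lemma basej (a b c d : ℍ[ℝ]) :
    c = P0 a b c d * qj + P1 a b c d * qj * qi + P2 a b c d * qj * qj + P3 a b c d * qj * qk := by
  ext <;> simp [P0, P1, P2, P3] <;> ring

lemma basek (a b c d : ℍ[ℝ]) :
    d = P0 a b c d * qk + P1 a b c d * qk * qi + P2 a b c d * qk * qj + P3 a b c d * qk * qk := by
  ext <;> simp [P0, P1, P2, P3] <;> ring

set_option maxHeartbeats 1600000 in
theorem endomorphism_lrMul_decomposition (M : ℍ[ℝ] →ₗ[ℝ] ℍ[ℝ]) :
    ∃! p : ℍ[ℝ] × ℍ[ℝ] × ℍ[ℝ] × ℍ[ℝ],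
      ∀ q : ℍ[ℝ],
        M q = p.1 * q + p.2.1 * q * qi + p.2.2.1 * q * qj + p.2.2.2 * q * qk := by
  set a := M 1 with ha
  set b := M qi with hb
  set c := M qj with hc
  set d := M qk with hd
  refine ⟨(P0 a b c d, P1 a b c d, P2 a b c d, P3 a b c d), ?_, ?_⟩
  · intro q
    have hM : M q = q.re • a + q.imI • b + q.imJ • c + q.imK • d := by
      conv_lhs => rw [quat_decomp q]
      simp [ha, hb, hc, hd]
    rw [hM]
    have expand : ∀ p0 p1 p2 p3 : ℍ[ℝ],
        p0 * q + p1 * q * qi + p2 * q * qj + p3 * q * qk =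
          q.re • (p0 * 1 + p1 * 1 * qi + p2 * 1 * qj + p3 * 1 * qk)
          + q.imI • (p0 * qi + p1 * qi * qi + p2 * qi * qj + p3 * qi * qk)
          + q.imJ • (p0 * qj + p1 * qj * qi + p2 * qj * qj + p3 * qj * qk)
          + q.imK • (p0 * qk + p1 * qk * qi + p2 * qk * qj + p3 * qk * qk) := by
      intro p0 p1 p2 p3
      conv_lhs => rw [quat_decomp q]
      simp only [mul_add, add_mul, mul_smul_comm, smul_mul_assoc, smul_add]
      abel
    rw [expand, ← base1 a b c d, ← basei a b c d, ← basej a b c d, ← basek a b c d]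
  · rintro ⟨e0, e1, e2, e3⟩ hp
    have h1 : a = e0 + e1 * qi + e2 * qj + e3 * qk := by simpa using hp 1
    have h2 : b = e0 * qi + e1 * qi * qi + e2 * qi * qj + e3 * qi * qk := hp qi
    have h3 : c = e0 * qj + e1 * qj * qi + e2 * qj * qj + e3 * qj * qk := hp qj
    have h4 : d = e0 * qk + e1 * qk * qi + e2 * qk * qj + e3 * qk * qk := hp qk
    rw [h1, h2, h3, h4]
    refine Prod.ext ?_ (Prod.ext ?_ (Prod.ext ?_ ?_)) <;>
      · ext <;> simp [P0, P1, P2, P3] <;> ring
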